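/- Let p, m, q ∈ ℝ and let D be the connection on U = {(x¹,x²) ∈ ℝ² : x¹ > 0} whose only possibly nonzero Christoffel symbols are Γ¹_{11} = p/x¹, Γ²_{11} = m/x¹ and Γ²_{12} = Γ²_{21} = q/x¹ (a Type B connection of class (i)). Then (U, D) admits an affine gradient Ricci soliton: the function h(x¹,x²) = (2q(1 + p − q)/(1 + p)) ln x¹ if p ≠ −1, and h(x¹,x²) = q² (ln x¹)² if p = −1, satisfies Hes_h(∂_i,∂_j) + 2ρ^{sym}_{ij} = 0 on U for all i,j ∈ {1,2}. -/

import Mathlib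

noncomputable section

/-- Points of the affine surface (local coordinates `(x¹,x²)`). -/
abbrev Pt2 := Fin 2 → ℝ

/-- Partial derivative `∂_{x^i}`. -/
def pd2 (i : Fin 2) (f : Pt2 → ℝ) (p : Pt2) : ℝ :=
  fderiv ℝ f p (Pi.single i 1)

/-- The Ricci tensor `ρ_{ij}` of the affine connection with Christoffel symbols `Γ^k_{ij}`:
`ρ_{ij} = Σ_k ∂_{x^k}Γ^k_{ij} − ∂_{x^i}(Σ_k Γ^k_{kj}) + Σ_{k,l}(Γ^k_{kl}Γ^l_{ij} − Γ^k_{il}Γ^l_{kj})`. -/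
def ricciD (Γ : Fin 2 → Fin 2 → Fin 2 → Pt2 → ℝ) (i j : Fin 2) (p : Pt2) : ℝ :=
  (∑ k : Fin 2, pd2 k (Γ k i j) p) - pd2 i (fun q => ∑ k : Fin 2, Γ k k j q) p
    + ∑ k : Fin 2, ∑ l : Fin 2, (Γ k k l p * Γ l i j p - Γ k i l p * Γ l k j p)

/-- The symmetric part `ρ^{sym}_{ij} = ½(ρ_{ij}+ρ_{ji})` of the Ricci tensor. -/
def ricciDSym (Γ : Fin 2 → Fin 2 → Fin 2 → Pt2 → ℝ) (i j : Fin 2) (p : Pt2) : ℝ :=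
  (ricciD Γ i j p + ricciD Γ j i p) / 2

/-- The affine Hessian `Hes_h(∂_i,∂_j) = ∂_i∂_j h − Σ_k Γ^k_{ij} ∂_k h`. -/
def hessD (Γ : Fin 2 → Fin 2 → Fin 2 → Pt2 → ℝ) (h : Pt2 → ℝ) (i j : Fin 2) (p : Pt2) : ℝ :=
  pd2 i (pd2 j h) p - ∑ k : Fin 2, Γ k i j p * pd2 k h p

/-- The covariant derivative of the Ricci tensor:
`(D_{∂_i}ρ)_{jk} = ∂_i ρ_{jk} − Σ_l Γ^l_{ij} ρ_{lk} − Σ_l Γ^l_{ik} ρ_{jl}`. -/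
def covRicciD (Γ : Fin 2 → Fin 2 → Fin 2 → Pt2 → ℝ) (i j k : Fin 2) (p : Pt2) : ℝ :=
  pd2 i (fun q => ricciD Γ j k q) p - (∑ l : Fin 2, Γ l i j p * ricciD Γ l k p)
    - ∑ l : Fin 2, Γ l i k p * ricciD Γ j l p

/-- The Type B class (i) connection with `Γ¹_{11} = p/x¹`, `Γ²_{11} = m/x¹`,
`Γ²_{12} = Γ²_{21} = q/x¹` and all other Christoffel symbols zero. -/
def ΓB1 (P m q : ℝ) : Fin 2 → Fin 2 → Fin 2 → Pt2 → ℝ := fun k i j x =>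
  if k = 0 ∧ i = 0 ∧ j = 0 then P / x 0
  else if k = 1 ∧ i = 0 ∧ j = 0 then m / x 0
  else if k = 1 ∧ ((i = 0 ∧ j = 1) ∨ (i = 1 ∧ j = 0)) then q / x 0
  else 0

lemma pd2_comp_eval (g : ℝ → ℝ) (g' : ℝ) (x : Pt2) (hg : HasDerivAt g g' (x 0)) (i : Fin 2) :
    pd2 i (fun y : Pt2 => g (y 0)) x = g' * (Pi.single i (1:ℝ) : Pt2) 0 := by
  have hp : HasFDerivAt (fun y : Pt2 => y 0) (ContinuousLinearMap.proj 0 : Pt2 →L[ℝ] ℝ) x :=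
    (ContinuousLinearMap.proj 0 : Pt2 →L[ℝ] ℝ).hasFDerivAt
  have h2 : HasFDerivAt (fun y : Pt2 => g (y 0))
      (g' • (ContinuousLinearMap.proj 0 : Pt2 →L[ℝ] ℝ)) x :=
    hg.comp_hasFDerivAt x hp
  rw [pd2, h2.fderiv]; simp

lemma pd2_const (c : ℝ) (x : Pt2) (i : Fin 2) : pd2 i (fun _ : Pt2 => c) x = 0 := by
  rw [pd2, fderiv_fun_const]; simp

lemma pd2_cdiv (c : ℝ) (x : Pt2) (hx : 0 < x 0) (i : Fin 2) :
    pd2 i (fun y : Pt2 => c / y 0) x = -c / (x 0) ^ 2 * (Pi.single i (1:ℝ) : Pt2) 0 := by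
  have hg : HasDerivAt (fun t : ℝ => c / t) (-c / (x 0) ^ 2) (x 0) := by
    simpa [div_eq_mul_inv, neg_div, mul_comm] using (hasDerivAt_inv hx.ne').const_mul c
  exact pd2_comp_eval _ _ x hg i

lemma pd2_pd2 (g g1 : ℝ → ℝ) (g2 : ℝ) (x : Pt2) (hx : 0 < x 0)
    (hg : ∀ t : ℝ, 0 < t → HasDerivAt g (g1 t) t) (hg1 : HasDerivAt g1 g2 (x 0)) (i j : Fin 2) :
    pd2 i (pd2 j (fun y : Pt2 => g (y 0))) x
      = g2 * (Pi.single j (1:ℝ) : Pt2) 0 * (Pi.single i (1:ℝ) : Pt2) 0 := by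
  have hopen : IsOpen {y : Pt2 | 0 < y 0} := isOpen_lt continuous_const (continuous_apply 0)
  have hE : (fun y : Pt2 => g1 (y 0) * (Pi.single j (1:ℝ) : Pt2) 0)
      =ᶠ[nhds x] pd2 j (fun y : Pt2 => g (y 0)) := by
    filter_upwards [hopen.mem_nhds hx] with y hy
    rw [pd2_comp_eval g (g1 (y 0)) y (hg _ hy) j]
  have h1 : pd2 i (fun y : Pt2 => g1 (y 0) * (Pi.single j (1:ℝ) : Pt2) 0) x
      = g2 * (Pi.single j (1:ℝ) : Pt2) 0 * (Pi.single i (1:ℝ) : Pt2) 0 := by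
    have := pd2_comp_eval (fun t => g1 t * (Pi.single j (1:ℝ) : Pt2) 0)
      (g2 * (Pi.single j (1:ℝ) : Pt2) 0) x (hg1.mul_const _) i
    rw [this]
  rw [pd2, ← hE.fderiv_eq, ← pd2, h1]

section Gammas
variable (P m q : ℝ)
lemma G000 : ΓB1 P m q 0 0 0 = fun y => P / y 0 := by funext y; simp [ΓB1]
lemma G100 : ΓB1 P m q 1 0 0 = fun y => m / y 0 := by funext y; simp [ΓB1]
lemma G101 : ΓB1 P m q 1 0 1 = fun y => q / y 0 := by funext y; simp [ΓB1]
lemma G110 : ΓB1 P m q 1 1 0 = fun y => q / y 0 := by funext y; simp [ΓB1]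
lemma G001 : ΓB1 P m q 0 0 1 = fun _ => (0:ℝ) := by funext y; simp [ΓB1]
lemma G010 : ΓB1 P m q 0 1 0 = fun _ => (0:ℝ) := by funext y; simp [ΓB1]
lemma G011 : ΓB1 P m q 0 1 1 = fun _ => (0:ℝ) := by funext y; simp [ΓB1]
lemma G111 : ΓB1 P m q 1 1 1 = fun _ => (0:ℝ) := by funext y; simp [ΓB1]

lemma ricci_val (x : Pt2) (hx : 0 < x 0) (i j : Fin 2) :
    ricciD (ΓB1 P m q) i j x = if i = 0 ∧ j = 0 then q * (1 + P - q) / (x 0) ^ 2 else 0 := by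
  have hcase : ∀ k : Fin 2, k = 0 ∨ k = 1 := by decide
  rcases hcase i with rfl | rfl <;> rcases hcase j with rfl | rfl <;>
    · simp only [ricciD, Fin.sum_univ_two, G000 P m q, G100 P m q, G101 P m q, G110 P m q,
        G001 P m q, G010 P m q, G011 P m q, G111 P m q, ← add_div, add_zero, zero_add,
        mul_zero, zero_mul, sub_zero, zero_sub, sub_self]
      simp only [pd2_cdiv _ x hx, pd2_const]
      simp [Pi.single_apply]
      all_goals field_simp
      all_goals ring
end Gammas

lemma pd2_h1 (C : ℝ) (x : Pt2) (hx : 0 < x 0) (i : Fin 2) :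
    pd2 i (fun y : Pt2 => C * Real.log (y 0)) x
      = C * (x 0)⁻¹ * (Pi.single i (1:ℝ) : Pt2) 0 :=
  pd2_comp_eval _ _ x ((Real.hasDerivAt_log hx.ne').const_mul C) i

lemma pd2_pd2_h1 (C : ℝ) (x : Pt2) (hx : 0 < x 0) (i j : Fin 2) :
    pd2 i (pd2 j (fun y : Pt2 => C * Real.log (y 0))) x
      = (C * -(((x 0)) ^ 2)⁻¹) * (Pi.single j (1:ℝ) : Pt2) 0 * (Pi.single i (1:ℝ) : Pt2) 0 :=
  pd2_pd2 _ (fun t => C * t⁻¹) _ x hx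
    (fun t ht => (Real.hasDerivAt_log ht.ne').const_mul C)
    ((hasDerivAt_inv hx.ne').const_mul C) i j

lemma hg2 (q : ℝ) : ∀ t : ℝ, 0 < t →
    HasDerivAt (fun t : ℝ => q ^ 2 * Real.log t ^ 2) (q ^ 2 * (2 * (Real.log t * t⁻¹))) t := by
  intro t ht
  have := ((Real.hasDerivAt_log ht.ne').pow 2).const_mul (q ^ 2)
  refine this.congr_deriv ?_
  push_cast
  ring

lemma hg2' (q : ℝ) (x : Pt2) (hx : 0 < x 0) :
    HasDerivAt (fun t : ℝ => q ^ 2 * (2 * (Real.log t * t⁻¹)))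
      (q ^ 2 * (2 * ((x 0)⁻¹ * (x 0)⁻¹ + Real.log (x 0) * -(((x 0)) ^ 2)⁻¹))) (x 0) :=
  (((Real.hasDerivAt_log hx.ne').mul (hasDerivAt_inv hx.ne')).const_mul 2).const_mul (q ^ 2)

lemma pd2_h2 (q : ℝ) (x : Pt2) (hx : 0 < x 0) (i : Fin 2) :
    pd2 i (fun y : Pt2 => q ^ 2 * Real.log (y 0) ^ 2) x
      = (q ^ 2 * (2 * (Real.log (x 0) * (x 0)⁻¹))) * (Pi.single i (1:ℝ) : Pt2) 0 :=
  pd2_comp_eval _ _ x (hg2 q (x 0) hx) i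

lemma pd2_pd2_h2 (q : ℝ) (x : Pt2) (hx : 0 < x 0) (i j : Fin 2) :
    pd2 i (pd2 j (fun y : Pt2 => q ^ 2 * Real.log (y 0) ^ 2)) x
      = (q ^ 2 * (2 * ((x 0)⁻¹ * (x 0)⁻¹ + Real.log (x 0) * -(((x 0)) ^ 2)⁻¹)))
          * (Pi.single j (1:ℝ) : Pt2) 0 * (Pi.single i (1:ℝ) : Pt2) 0 :=
  pd2_pd2 _ (fun t => q ^ 2 * (2 * (Real.log t * t⁻¹))) _ x hx (hg2 q) (hg2' q x hx) i j

/-- The Type B class (i) connection admits an affine gradient Ricci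
soliton: the function `h = (2q(1+p−q)/(1+p)) ln x¹` (if `p ≠ −1`), resp.
`h = q²(ln x¹)²` (if `p = −1`), solves `Hes_h(∂_i,∂_j) + 2ρ^{sym}_{ij} = 0` on `{x¹ > 0}`. -/
theorem stmt11 (P m q : ℝ) (h : Pt2 → ℝ)
    (hdef : h = if P ≠ -1
      then fun x : Pt2 => (2 * q * (1 + P - q) / (1 + P)) * Real.log (x 0)
      else fun x : Pt2 => q ^ 2 * (Real.log (x 0)) ^ 2) :
    ∀ x : Pt2, 0 < x 0 → ∀ i j : Fin 2,
      hessD (ΓB1 P m q) h i j x + 2 * ricciDSym (ΓB1 P m q) i j x = 0 := by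
  subst hdef
  intro x hx i j
  have hcase : ∀ k : Fin 2, k = 0 ∨ k = 1 := by decide
  by_cases hP : P ≠ -1
  · have hP1 : 1 + P ≠ 0 := fun hc => hP (by linarith)
    rw [if_pos hP]
    rcases hcase i with rfl | rfl <;> rcases hcase j with rfl | rfl <;>
      · simp only [hessD, ricciDSym, Fin.sum_univ_two, ricci_val P m q x hx,
          G000 P m q, G100 P m q, G101 P m q, G110 P m q,
          G001 P m q, G010 P m q, G011 P m q, G111 P m q,
          pd2_pd2_h1 _ x hx, pd2_h1 _ x hx]
        simp [Pi.single_apply]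
        all_goals field_simp
        all_goals ring
  · push_neg at hP
    subst hP
    rw [if_neg (by simp)]
    rcases hcase i with rfl | rfl <;> rcases hcase j with rfl | rfl <;>
      · simp only [hessD, ricciDSym, Fin.sum_univ_two, ricci_val (-1) m q x hx,
          G000 (-1) m q, G100 (-1) m q, G101 (-1) m q, G110 (-1) m q,
          G001 (-1) m q, G010 (-1) m q, G011 (-1) m q, G111 (-1) m q,
          pd2_pd2_h2 q x hx, pd2_h2 q x hx]
        simp [Pi.single_apply]
        all_goals field_simp
        all_goals ring

end
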